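/- Fix an integer m ≥ 1 and a real p. Define P : (ZMod 3) × (ZMod 3) → ℝ by P(0,0) = p and P(i,j) = (1−p)/8 otherwise, let r : (ZMod 3) × (ZMod 3) → ℝ satisfy Σ_{i,j} r(i,j) = 1, and set A_m = ((3p+1)/4)^m, B_m = ((9p−1)/8)^m, C_m = (3(1−p)/8)^m. Then for every s ∈ ZMod 3 with s ≠ 0 and every t ∈ ZMod 3, the sum, over all tuples ((x₀,z₀),(x₁,z₁),…,(x_m,z_m)) ∈ ((ZMod 3) × (ZMod 3))^{m+1} satisfying z₁ = z₂ = ⋯ = z_m, z₀ − z₁ = t, x₀ = s, and x₀ + x₁ + ⋯ + x_m = 0 in ZMod 3, of r(x₀,z₀)·∏_{k=1}^m P(x_k,z_k), equals (1/3)·[r(s,t)·(A_m − B_m) + (r(s,t+1) + r(s,t+2))·C_m]. -/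

import Mathlib

open Finset

lemma key (Q : ZMod 3 → ℝ) (hQ : Q 1 = Q 2) (m : ℕ) (a : ZMod 3) :
    ∑ x ∈ univ.filter (fun x : Fin m → ZMod 3 => ∑ k, x k = a), ∏ k, Q (x k)
    = if a = 0 then (1/3) * ((Q 0 + 2*Q 1)^m + 2*(Q 0 - Q 1)^m)
      else (1/3) * ((Q 0 + 2*Q 1)^m - (Q 0 - Q 1)^m) := by
  induction m generalizing a with
  | zero =>
      rw [Finset.sum_filter]
      simp only [Finset.univ_unique, Finset.sum_singleton]
      by_cases h : a = 0 <;> simp [h, eq_comm] <;> ring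
  | succ n ih =>
      rw [Finset.sum_filter]
      rw [← (Fin.consEquiv (fun _ : Fin (n+1) => ZMod 3)).sum_comp]
      rw [Fintype.sum_prod_type]
      simp only [Fin.consEquiv_apply, Fin.sum_cons, Fin.prod_univ_succ, Fin.cons_zero, Fin.cons_succ]
      have step : ∀ b : ZMod 3,
          (∑ x : Fin n → ZMod 3, if b + ∑ k, x k = a then Q b * ∏ k, Q (x k) else 0)
          = Q b * ∑ x ∈ univ.filter (fun x : Fin n → ZMod 3 => ∑ k, x k = a - b),
              ∏ k, Q (x k) := by
        intro b
        rw [Finset.sum_filter, Finset.mul_sum]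
        refine Finset.sum_congr rfl fun x _ => ?_
        have : (b + ∑ k, x k = a) ↔ (∑ k, x k = a - b) := by
          constructor <;> intro h <;> [rw [← h]; rw [h]] <;> ring
        rw [mul_ite, mul_zero]
        exact if_congr this rfl rfl
      simp only [step, ih]
      have expand : ∀ g : ZMod 3 → ℝ, ∑ x : ZMod 3, g x = g 0 + g 1 + g 2 :=
        fun g => Fin.sum_univ_three g
      rw [expand]
      have hQ2 : Q 2 = Q 1 := hQ.symm
      by_cases h : a = 0
      · subst h
        norm_num [hQ2, show (2:ZMod 3) ≠ 0 from by decide, show (1:ZMod 3) ≠ 0 from by decide]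
        ring
      · have : a = 1 ∨ a = 2 := by clear step; revert h; revert a; decide
        rcases this with h1 | h1 <;> subst h1 <;>
          norm_num [hQ2, show (2:ZMod 3) ≠ 0 from by decide, show (1:ZMod 3) ≠ 0 from by decide, show (1:ZMod 3) - 1 = 0 from by decide,
            show (1:ZMod 3) - 2 = 2 from by decide, show (2:ZMod 3) - 1 = 1 from by decide,
            show (2:ZMod 3) - 2 = 0 from by decide, show (0:ZMod 3) - 1 = 2 from by decide,
            show (0:ZMod 3) - 2 = 1 from by decide] <;> ring

theorem mcaepp_joint_probability_s_ne_zero (m : ℕ) (hm : 1 ≤ m) (p : ℝ)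
    (P : ZMod 3 × ZMod 3 → ℝ)
    (hP0 : P (0, 0) = p) (hP : ∀ x : ZMod 3 × ZMod 3, x ≠ (0, 0) → P x = (1 - p) / 8)
    (r : ZMod 3 × ZMod 3 → ℝ) (hr : ∑ x : ZMod 3 × ZMod 3, r x = 1)
    (s : ZMod 3) (hs : s ≠ 0) (t : ZMod 3) :
    ∑ e ∈ Finset.univ.filter
        (fun e : (ZMod 3 × ZMod 3) × (Fin m → ZMod 3 × ZMod 3) =>
          (∀ i j : Fin m, (e.2 i).2 = (e.2 j).2) ∧
          (∀ i : Fin m, e.1.2 - (e.2 i).2 = t) ∧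
          e.1.1 = s ∧
          e.1.1 + ∑ k : Fin m, (e.2 k).1 = 0),
        r e.1 * ∏ k : Fin m, P (e.2 k)
      = (1 / 3) * (r (s, t) * (((3 * p + 1) / 4) ^ m - ((9 * p - 1) / 8) ^ m)
          + (r (s, t + 1) + r (s, t + 2)) * ((3 * (1 - p)) / 8) ^ m) := by
  classical
  set inr : ZMod 3 → ℝ := fun z =>
    ∑ x ∈ univ.filter (fun x : Fin m → ZMod 3 => ∑ k, x k = -s),
      ∏ k, P (x k, z) with hinr
  -- reindexing of the inner sum
  have reindex : ∀ z : ZMod 3,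
      (∑ f ∈ univ.filter (fun f : Fin m → ZMod 3 × ZMod 3 =>
          (∀ i, (f i).2 = z) ∧ ∑ k, (f k).1 = -s), ∏ k, P (f k)) = inr z := by
    intro z
    refine Finset.sum_nbij' (fun f => fun k => (f k).1) (fun x => fun k => (x k, z))
      ?_ ?_ ?_ ?_ ?_
    · intro f hf
      simp only [mem_filter, mem_univ, true_and] at hf ⊢
      exact hf.2
    · intro x hx
      simp only [mem_filter, mem_univ, true_and] at hx ⊢
      exact ⟨fun i => trivial, hx⟩
    · intro f hf
      simp only [mem_filter, mem_univ, true_and] at hf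
      funext k
      exact Prod.ext rfl (hf.1 k).symm
    · intro x hx
      rfl
    · intro f hf
      simp only [mem_filter, mem_univ, true_and] at hf
      refine Finset.prod_congr rfl fun k _ => ?_
      rw [show ((f k).1, z) = f k from Prod.ext rfl (hf.1 k).symm]
  -- Step 1: reduce the big sum
  have step1 : (∑ e ∈ Finset.univ.filter
        (fun e : (ZMod 3 × ZMod 3) × (Fin m → ZMod 3 × ZMod 3) =>
          (∀ i j : Fin m, (e.2 i).2 = (e.2 j).2) ∧
          (∀ i : Fin m, e.1.2 - (e.2 i).2 = t) ∧
          e.1.1 = s ∧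
          e.1.1 + ∑ k : Fin m, (e.2 k).1 = 0),
        r e.1 * ∏ k : Fin m, P (e.2 k))
      = ∑ z0 : ZMod 3, r (s, z0) * inr (z0 - t) := by
    rw [Finset.sum_filter, Fintype.sum_prod_type, Fintype.sum_prod_type]
    have hx0 : ∀ x0 z0 : ZMod 3,
        (∑ f : Fin m → ZMod 3 × ZMod 3,
          if (∀ i j : Fin m, (f i).2 = (f j).2) ∧
             (∀ i : Fin m, ((x0, z0) : ZMod 3 × ZMod 3).2 - (f i).2 = t) ∧
             ((x0, z0) : ZMod 3 × ZMod 3).1 = s ∧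
             (((x0, z0) : ZMod 3 × ZMod 3).1 + ∑ k, (f k).1 = 0)
          then r (x0, z0) * ∏ k, P (f k) else 0)
        = if x0 = s then r (s, z0) * inr (z0 - t) else 0 := by
      intro x0 z0
      by_cases hx : x0 = s
      · subst hx
        rw [if_pos rfl, ← reindex (z0 - t), Finset.sum_filter, Finset.mul_sum]
        refine Finset.sum_congr rfl fun f _ => ?_
        have hiff : ((∀ i j : Fin m, (f i).2 = (f j).2) ∧
             (∀ i : Fin m, z0 - (f i).2 = t) ∧ x0 = x0 ∧
             (x0 + ∑ k, (f k).1 = 0))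
            ↔ ((∀ i : Fin m, (f i).2 = z0 - t) ∧ (∑ k, (f k).1 = -x0)) := by
          constructor
          · rintro ⟨_, h2, _, h4⟩
            exact ⟨fun i => by rw [← h2 i, sub_sub_cancel],
              eq_neg_of_add_eq_zero_right h4⟩
          · rintro ⟨h1, h2⟩
            refine ⟨fun i j => by rw [h1 i, h1 j],
              fun i => by rw [h1 i, sub_sub_cancel], rfl, by rw [h2, add_neg_cancel]⟩
        rw [if_congr hiff rfl rfl, mul_ite, mul_zero]
      · rw [if_neg hx]
        apply Finset.sum_eq_zero
        intro f _
        rw [if_neg]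
        rintro ⟨_, _, h, _⟩; exact hx h
    simp only [hx0]
    rw [Finset.sum_comm]
    refine Finset.sum_congr rfl fun z0 _ => ?_
    simp [Finset.sum_ite_eq']
  rw [step1]
  have hinrz : ∀ z : ZMod 3, inr z =
      if z = 0 then (1/3) * (((3*p+1)/4)^m - ((9*p-1)/8)^m)
      else (1/3) * ((3*(1-p))/8)^m := by
    intro z
    have h1z : P (1, z) = (1-p)/8 :=
      hP _ (by simp [Prod.ext_iff, (by decide : (1:ZMod 3) ≠ 0)])
    have h2z : P (2, z) = (1-p)/8 :=
      hP _ (by simp [Prod.ext_iff, (by decide : (2:ZMod 3) ≠ 0)])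
    have hk := key (fun x => P (x, z)) (by simp [h1z, h2z]) m (-s)
    rw [if_neg (by simpa using hs)] at hk
    rw [hinr]
    simp only []
    rw [hk]
    by_cases hz : z = 0
    · subst hz
      rw [if_pos rfl, hP0, h1z,
        show p + 2*((1-p)/8) = (3*p+1)/4 by ring,
        show p - (1-p)/8 = (9*p-1)/8 by ring]
    · have h0z : P (0, z) = (1-p)/8 := hP _ (by simp [hz])
      rw [if_neg hz, h0z, h1z,
        show ((1-p)/8 - (1-p)/8 : ℝ) = 0 by ring,
        zero_pow (by omega : m ≠ 0),
        show (1-p)/8 + 2*((1-p)/8) = (3*(1-p))/8 by ring]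
      ring
  simp only [hinrz]
  rw [← Fintype.sum_equiv (Equiv.addLeft t)
      (fun u : ZMod 3 => r (s, t + u) *
        (if u = 0 then (1/3) * (((3*p+1)/4)^m - ((9*p-1)/8)^m)
         else (1/3) * ((3*(1-p))/8)^m))
      (fun z0 : ZMod 3 => r (s, z0) *
        (if z0 - t = 0 then (1/3) * (((3*p+1)/4)^m - ((9*p-1)/8)^m)
         else (1/3) * ((3*(1-p))/8)^m))
      (fun u => by simp [Equiv.coe_addLeft, add_sub_cancel_left])]
  have expand : ∀ g : ZMod 3 → ℝ, ∑ x : ZMod 3, g x = g 0 + g 1 + g 2 :=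
    fun g => Fin.sum_univ_three g
  rw [expand]
  simp only [add_zero, eq_self_iff_true, if_true, if_pos rfl, if_neg (show (1:ZMod 3) ≠ 0 from by decide),
    if_neg (show (2:ZMod 3) ≠ 0 from by decide)]
  ring
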